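/- Let n ≥ 1 and let ι be a finite type with Fintype.card ι = n². Suppose A : ι → Matrix (Fin n) (Fin n) ℂ is an orthonormal family for the Hilbert–Schmidt inner product: trace((A i)ᴴ * A j) = 1 if i = j and 0 otherwise. Then Σ_{i ∈ ι} (A i) ⊗ₖ (A i)ᴴ = SWAP, where ⊗ₖ is the Kronecker product and SWAP : Matrix (Fin n × Fin n) (Fin n × Fin n) ℂ is defined by SWAP (p,q) (r,s) = 1 if p = s and q = r, and 0 otherwise. -/

import Mathlib

open Matrix Kronecker

/-- If `{A i}` is an orthonormal family of `n²` matrices for the Hilbert–Schmidt inner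
product, then `Σ i, (A i) ⊗ₖ (A i)ᴴ` is the SWAP operator on `ℂⁿ ⊗ ℂⁿ`. -/
theorem stmt_10 (n : ℕ) (hn : 1 ≤ n) (ι : Type*) [Fintype ι] [DecidableEq ι]
    (hcard : Fintype.card ι = n ^ 2) (A : ι → Matrix (Fin n) (Fin n) ℂ)
    (horth : ∀ i j : ι, ((A i)ᴴ * A j).trace = if i = j then 1 else 0) :
    ∑ i : ι, (A i) ⊗ₖ (A i)ᴴ =
      (fun p q : Fin n × Fin n => if p.1 = q.2 ∧ p.2 = q.1 then (1 : ℂ) else 0) := by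
  have hne : Nonempty ι := by
    rw [← Fintype.card_pos_iff, hcard]; positivity
  set v : ι → EuclideanSpace ℂ (Fin n × Fin n) := fun i => WithLp.toLp 2 (fun p : Fin n × Fin n => A i p.1 p.2) with hv
  have hortho : Orthonormal ℂ v := by
    rw [orthonormal_iff_ite]
    intro i j
    have htr := horth i j
    rw [Matrix.trace] at htr
    simp only [Matrix.diag, Matrix.mul_apply, Matrix.conjTranspose_apply] at htr
    rw [← htr, PiLp.inner_apply]
    simp only [RCLike.inner_apply, Fintype.sum_prod_type]
    exact Finset.sum_comm.trans (Finset.sum_congr rfl fun _ _ => Finset.sum_congr rfl fun _ _ => mul_comm _ _)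
  have hcard' : Fintype.card ι = Module.finrank ℂ (EuclideanSpace ℂ (Fin n × Fin n)) := by
    simp [hcard]; ring
  let b : OrthonormalBasis ι ℂ (EuclideanSpace ℂ (Fin n × Fin n)) :=
    (basisOfOrthonormalOfCardEqFinrank hortho hcard').toOrthonormalBasis
      (by rwa [coe_basisOfOrthonormalOfCardEqFinrank])
  have hb : ⇑b = v := by
    simp [b, coe_basisOfOrthonormalOfCardEqFinrank]
  funext p q
  obtain ⟨p1, p2⟩ := p
  obtain ⟨q1, q2⟩ := q
  have key := b.sum_repr (EuclideanSpace.single (q2, p2) (1 : ℂ))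
  have key2 := congrArg ((PiLp.projₗ 2 (fun _ : Fin n × Fin n => ℂ) (p1, q1) : EuclideanSpace ℂ (Fin n × Fin n) →ₗ[ℂ] ℂ)) key
  rw [map_sum] at key2
  simp only [_root_.map_smul, PiLp.smul_apply, PiLp.projₗ_apply, smul_eq_mul,
    OrthonormalBasis.repr_apply_apply, PiLp.inner_apply, RCLike.inner_apply,
    EuclideanSpace.single_apply, hb, mul_ite, mul_one, mul_zero, ite_mul, one_mul, zero_mul,
    Finset.sum_ite_eq' Finset.univ, Finset.mem_univ, if_true] at key2
  simp only [Matrix.sum_apply, Matrix.kroneckerMap_apply, Matrix.conjTranspose_apply]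
  rw [show (∑ x : ι, A x p1 q1 * star (A x q2 p2)) =
      ∑ x : ι, (starRingEnd ℂ) (v x (q2, p2)) * v x (p1, q1) from
    Finset.sum_congr rfl fun i _ => by simp [v, mul_comm, Complex.star_def]]
  rw [key2]
  by_cases h : (p1, q1) = (q2, p2) <;> simp_all [Prod.ext_iff, eq_comm]
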